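/- Define W̃_{m,a}(n,k) = ∑_{j=k}^{n} C(n,j) * (-a)^{n-j} * m^{j-k} * S(j,k) and F̃_{m,a}(n;x) = ∑_{k=0}^{n} k! * W̃_{m,a}(n,k) * x^k. Then for all natural n, real m, a, x with m + x ≠ 0: F̃_{m,a}(n;x) = x * ∑_{k=0}^{n} (-1)^{n+k} * k! * W̃_{m,-a}(n,k) * (m+x)^{k-1} + (-a)^n * m / (m+x). -/

import Mathlib

open Finset
open Polynomial

def stirling2 : ℕ → ℕ → ℕ
  | 0, 0 => 1
  | 0, _ + 1 => 0
  | _ + 1, 0 => 0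
  | n + 1, k + 1 => (k + 1) * stirling2 n (k + 1) + stirling2 n k

noncomputable def w (n : ℕ) (x : ℝ) : ℝ :=
  ∑ k ∈ range (n + 1), (k.factorial : ℝ) * (stirling2 n k : ℝ) * x ^ k

noncomputable def Wt (m a : ℝ) (n k : ℕ) : ℝ :=
  ∑ j ∈ Icc k n, (n.choose j : ℝ) * (-a) ^ (n - j) * m ^ (j - k) * (stirling2 j k : ℝ)

noncomputable def FtW (m a : ℝ) (n : ℕ) (x : ℝ) : ℝ :=
  ∑ k ∈ range (n + 1), (k.factorial : ℝ) * Wt m a n k * x ^ k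


lemma stirling2_eq_zero : ∀ (j k : ℕ), j < k → stirling2 j k = 0 := by
  intro j
  induction j with
  | zero => intro k hk; match k, hk with | k+1, _ => rfl
  | succ n ih =>
    intro k hk
    match k, hk with
    | k+1, hk =>
      have h1 : n < k + 1 := by omega
      have h2 : n < k := by omega
      simp [stirling2, ih _ h1, ih _ h2]
noncomputable def AP (m : ℝ) (j : ℕ) : Polynomial ℝ :=
  ∑ k ∈ range (j + 1), C ((k.factorial : ℝ) * (stirling2 j k : ℝ) * m ^ (j - k)) * X ^ k
lemma X_mul_deriv (a : ℝ) (k : ℕ) :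
    X * derivative (C a * X ^ k) = C (a * k) * X ^ k := by
  cases k with
  | zero => simp
  | succ k =>
    rw [derivative_C_mul_X_pow]
    push_cast
    ring_nf
lemma AP_succ (m : ℝ) (j : ℕ) :
    AP m (j + 1) = X * ((C m + X) * derivative (AP m j) + AP m j) := by
  have hXd : X * derivative (AP m j)
      = ∑ k ∈ range (j + 1),
          C ((k.factorial : ℝ) * (stirling2 j k : ℝ) * m ^ (j - k) * k) * X ^ k := by
    rw [AP, derivative_sum, Finset.mul_sum]
    exact Finset.sum_congr rfl fun k _ => X_mul_deriv _ k
  have expand : X * ((C m + X) * derivative (AP m j) + AP m j)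
      = C m * (X * derivative (AP m j)) + (X * (X * derivative (AP m j)) + X * AP m j) := by
    ring
  rw [expand, hXd, AP, AP, Finset.mul_sum, Finset.mul_sum, Finset.mul_sum,
    ← Finset.sum_add_distrib]
  have hR1 : ∀ k ∈ range (j+1),
      C m * (C ((k.factorial : ℝ) * (stirling2 j k : ℝ) * m ^ (j - k) * k) * X ^ k)
      = C (m * ((k.factorial : ℝ) * (stirling2 j k : ℝ) * m ^ (j - k)) * k) * X ^ k := by
    intro k _
    rw [← mul_assoc, ← C_mul]
    ring_nf
  have hR2 : ∀ k ∈ range (j+1),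
      X * (C ((k.factorial : ℝ) * (stirling2 j k : ℝ) * m ^ (j - k) * k) * X ^ k)
        + X * (C ((k.factorial : ℝ) * (stirling2 j k : ℝ) * m ^ (j - k)) * X ^ k)
      = C ((k.factorial : ℝ) * (stirling2 j k : ℝ) * m ^ (j - k) * (k+1)) * X ^ (k+1) := by
    intro k _
    have e : (k.factorial : ℝ) * (stirling2 j k : ℝ) * m ^ (j - k) * (k+1)
        = (k.factorial : ℝ) * (stirling2 j k : ℝ) * m ^ (j - k) * k
          + (k.factorial : ℝ) * (stirling2 j k : ℝ) * m ^ (j - k) := by ring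
    rw [e, map_add]
    ring
  rw [Finset.sum_congr rfl hR1, Finset.sum_congr rfl hR2]
  conv_lhs => rw [Finset.sum_range_succ' _ (j+1)]
  conv_lhs => rw [Finset.sum_range_succ]
  conv_rhs => rw [Finset.sum_range_succ' _ j]
  conv_rhs => rw [Finset.sum_range_succ _ j]
  have key : ∀ i ∈ range j,
      C (((i+1).factorial : ℝ) * (stirling2 (j+1) (i+1) : ℝ) * m ^ (j + 1 - (i+1))) * X ^ (i+1)
      = C (m * (((i+1).factorial : ℝ) * (stirling2 j (i+1) : ℝ) * m ^ (j - (i+1))) * (i+1)) * X ^ (i+1)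
        + C ((i.factorial : ℝ) * (stirling2 j i : ℝ) * m ^ (j - i) * (i+1)) * X ^ (i+1) := by
    intro i hi
    simp only [mem_range] at hi
    rw [← add_mul, ← map_add]
    congr 2
    have hji : j - i = (j - (i+1)) + 1 := by omega
    have hji2 : j + 1 - (i + 1) = (j - (i+1)) + 1 := by omega
    rw [hji, hji2, pow_succ]
    simp only [stirling2]
    push_cast [Nat.factorial_succ]
    ring
  have top :
      C (((j+1).factorial : ℝ) * (stirling2 (j+1) (j+1) : ℝ) * m ^ (j + 1 - (j+1))) * X ^ (j+1)
      = C ((j.factorial : ℝ) * (stirling2 j j : ℝ) * m ^ (j - j) * (j+1)) * X ^ (j+1) := by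
    congr 2
    simp only [stirling2, stirling2_eq_zero j (j+1) (by omega)]
    push_cast [Nat.factorial_succ]
    ring
  rw [Finset.sum_congr rfl key, Finset.sum_add_distrib, top]
  simp [stirling2]
  ring
lemma AP_reflect (m : ℝ) (j : ℕ) :
    (C m + X) * AP m j
      = C ((-1 : ℝ) ^ j) * (X * (AP m j).comp (-(C m) - X))
        + (if j = 0 then C m else 0) := by
  induction j with
  | zero =>
      simp [AP, stirling2]
      ring
  | succ j ih =>
      have hif : derivative (if j = 0 then C m else (0 : Polynomial ℝ)) = 0 := by
        split <;> simp
      have hd := congrArg derivative ih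
      simp only [derivative_mul, derivative_add, derivative_C, derivative_X, derivative_comp,
        derivative_neg, derivative_sub, derivative_C_mul, hif, zero_mul, mul_one, one_mul,
        zero_add, add_zero, neg_zero, sub_zero, zero_sub] at hd
      have hC : C ((-1 : ℝ) ^ (j+1)) = -C ((-1 : ℝ) ^ j) := by
        rw [pow_succ]; simp
      rw [AP_succ, hC]
      simp only [mul_comp, add_comp, X_comp, C_comp, if_neg (Nat.succ_ne_zero j), add_zero]
      linear_combination (X * (C m + X)) * hd
lemma AP_eval (m x : ℝ) (j : ℕ) :
    (AP m j).eval x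
      = ∑ k ∈ range (j + 1),
          (k.factorial : ℝ) * (stirling2 j k : ℝ) * m ^ (j - k) * x ^ k := by
  simp [AP, eval_finset_sum]
lemma reflect_eval (m x : ℝ) (j : ℕ) :
    (m + x) * (AP m j).eval x
      = (-1 : ℝ) ^ j * (x * (AP m j).eval (-m - x)) + (if j = 0 then m else 0) := by
  have h := congrArg (eval x) (AP_reflect m j)
  simpa [eval_comp, apply_ite (eval x)] using h
lemma perj (m x : ℝ) (h : m + x ≠ 0) (j : ℕ) :
    (AP m j).eval x
      = x * ∑ k ∈ range (j + 1),
          (-1 : ℝ) ^ (j + k) * (k.factorial : ℝ) * (stirling2 j k : ℝ) * m ^ (j - k)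
            * (m + x) ^ ((k : ℤ) - 1)
        + (if j = 0 then m / (m + x) else 0) := by
  have hzz : ∀ k : ℕ, (m + x) * (m + x) ^ ((k : ℤ) - 1) = (m + x) ^ k := by
    intro k
    have : (m + x) * (m + x) ^ ((k : ℤ) - 1) = (m + x) ^ ((1 : ℤ) + ((k : ℤ) - 1)) := by
      rw [zpow_add₀ h, zpow_one]
    rw [this]
    norm_num
  have hA : (AP m j).eval (-m - x)
      = ∑ k ∈ range (j + 1),
          (k.factorial : ℝ) * (stirling2 j k : ℝ) * m ^ (j - k) * ((-1) ^ k * (m + x) ^ k) := by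
    rw [AP_eval]
    refine Finset.sum_congr rfl fun k _ => ?_
    have e : -m - x = -(m + x) := by ring
    rw [e, neg_pow]
  apply mul_left_cancel₀ h
  rw [reflect_eval m x j, hA]
  have e2 : (m + x) * ∑ k ∈ range (j + 1),
        (-1 : ℝ) ^ (j + k) * (k.factorial : ℝ) * (stirling2 j k : ℝ) * m ^ (j - k)
          * (m + x) ^ ((k : ℤ) - 1)
      = ∑ k ∈ range (j + 1),
        (-1 : ℝ) ^ (j + k) * (k.factorial : ℝ) * (stirling2 j k : ℝ) * m ^ (j - k)
          * (m + x) ^ k := by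
    rw [Finset.mul_sum]
    refine Finset.sum_congr rfl fun k _ => ?_
    rw [← hzz k]
    ring
  have e3 : (m + x) * (if j = 0 then m / (m + x) else 0) = (if j = 0 then m else 0) := by
    split <;> field_simp <;> simp
  rw [mul_add, mul_left_comm (m + x) x, e2, e3]
  congr 1
  rw [Finset.mul_sum, Finset.mul_sum, Finset.mul_sum]
  refine Finset.sum_congr rfl fun k _ => ?_
  rw [pow_add]
  ring
lemma swapIcc (n : ℕ) (f : ℕ → ℕ → ℝ) :
    ∑ k ∈ range (n + 1), ∑ j ∈ Icc k n, f k j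
      = ∑ j ∈ range (n + 1), ∑ k ∈ range (j + 1), f k j := by
  refine Finset.sum_comm' ?_
  intro k j
  simp only [mem_range, mem_Icc]
  omega
lemma FtW_eq (m a x : ℝ) (n : ℕ) :
    FtW m a n x
      = ∑ j ∈ range (n + 1), (n.choose j : ℝ) * (-a) ^ (n - j) * (AP m j).eval x := by
  rw [FtW]
  have e : ∀ k ∈ range (n + 1), (k.factorial : ℝ) * Wt m a n k * x ^ k
      = ∑ j ∈ Icc k n, (n.choose j : ℝ) * (-a) ^ (n - j)
          * ((k.factorial : ℝ) * (stirling2 j k : ℝ) * m ^ (j - k) * x ^ k) := by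
    intro k _
    rw [Wt, Finset.mul_sum, Finset.sum_mul]
    exact Finset.sum_congr rfl fun j _ => by ring
  rw [Finset.sum_congr rfl e, swapIcc]
  refine Finset.sum_congr rfl fun j _ => ?_
  rw [AP_eval, Finset.mul_sum]
lemma RHS_eq (m a x : ℝ) (n : ℕ) :
    x * ∑ k ∈ range (n + 1),
        (-1 : ℝ) ^ (n + k) * (k.factorial : ℝ) * Wt m (-a) n k * (m + x) ^ ((k : ℤ) - 1)
      = ∑ j ∈ range (n + 1), (n.choose j : ℝ) * (-a) ^ (n - j) *
          (x * ∑ k ∈ range (j + 1),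
            (-1 : ℝ) ^ (j + k) * (k.factorial : ℝ) * (stirling2 j k : ℝ) * m ^ (j - k)
              * (m + x) ^ ((k : ℤ) - 1)) := by
  rw [Finset.mul_sum]
  have e : ∀ k ∈ range (n + 1),
      x * ((-1 : ℝ) ^ (n + k) * (k.factorial : ℝ) * Wt m (-a) n k * (m + x) ^ ((k : ℤ) - 1))
      = ∑ j ∈ Icc k n, (n.choose j : ℝ) * (-a) ^ (n - j) *
          (x * ((-1 : ℝ) ^ (j + k) * (k.factorial : ℝ) * (stirling2 j k : ℝ) * m ^ (j - k)
            * (m + x) ^ ((k : ℤ) - 1))) := by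
    intro k _
    rw [Wt, Finset.mul_sum, Finset.sum_mul, Finset.mul_sum]
    refine Finset.sum_congr rfl fun j hj => ?_
    simp only [mem_Icc] at hj
    have h2 : ((-1 : ℝ)) ^ (n - j) * (-1 : ℝ) ^ (j + k) = (-1 : ℝ) ^ (n + k) := by
      rw [← pow_add]
      congr 1
      omega
    have hsign : ((-1 : ℝ)) ^ (n + k) * a ^ (n - j) = (-a) ^ (n - j) * (-1 : ℝ) ^ (j + k) := by
      rw [show (-a : ℝ) ^ (n - j) = (-1 : ℝ) ^ (n - j) * a ^ (n - j) from by rw [neg_pow]]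
      rw [← h2]
      ring
    rw [neg_neg]
    linear_combination (x * (k.factorial : ℝ) * (n.choose j : ℝ) * m ^ (j - k)
      * (stirling2 j k : ℝ) * (m + x) ^ ((k : ℤ) - 1)) * hsign
  rw [Finset.sum_congr rfl e, swapIcc]
  refine Finset.sum_congr rfl fun j _ => ?_
  rw [Finset.mul_sum, Finset.mul_sum]

theorem stmt13 (n : ℕ) (m a x : ℝ) (h : m + x ≠ 0) :
    FtW m a n x
      = x * ∑ k ∈ range (n + 1),
          (-1) ^ (n + k) * (k.factorial : ℝ) * Wt m (-a) n k * (m + x) ^ ((k : ℤ) - 1)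
        + (-a) ^ n * m / (m + x) := by
  rw [FtW_eq m a x n, RHS_eq m a x n]
  have e : ∀ j ∈ range (n + 1),
      (n.choose j : ℝ) * (-a) ^ (n - j) * (AP m j).eval x
      = (n.choose j : ℝ) * (-a) ^ (n - j) *
          (x * ∑ k ∈ range (j + 1),
            (-1 : ℝ) ^ (j + k) * (k.factorial : ℝ) * (stirling2 j k : ℝ) * m ^ (j - k)
              * (m + x) ^ ((k : ℤ) - 1))
        + (if j = 0 then (n.choose j : ℝ) * (-a) ^ (n - j) * (m / (m + x)) else 0) := by
    intro j _
    rw [perj m x h j, mul_add]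
    congr 1
    split <;> simp
  rw [Finset.sum_congr rfl e, Finset.sum_add_distrib]
  congr 1
  rw [Finset.sum_ite_eq' (range (n + 1)) 0
    (fun j => (n.choose j : ℝ) * (-a) ^ (n - j) * (m / (m + x)))]
  simp
  ring
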